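/- Let f : ℝ → ℝ be a real-valued characteristic function of a probability measure on ℝ (i.e., f(s) = E[cos(sξ)] for a symmetric real random variable ξ, equivalently f is continuous, f(0)=1, and f is positive definite) satisfying f(2s) = f(s)² · (f(2s)+1)/2 for all s ∈ ℝ. Then there exists a real number σ such that f(s) = 2/(e^{σs} + e^{-σs}) for all s ∈ ℝ. -/

import Mathlib

open MeasureTheory Real Filter Topology
open scoped ENNReal

noncomputable def myacosh (c : ℝ) : ℝ := Real.log (c + Real.sqrt (c ^ 2 - 1))

lemma myacosh_nonneg {c : ℝ} (hc : 1 ≤ c) : 0 ≤ myacosh c :=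
  Real.log_nonneg (by have := Real.sqrt_nonneg (c ^ 2 - 1); linarith)

lemma cosh_myacosh {c : ℝ} (hc : 1 ≤ c) : Real.cosh (myacosh c) = c := by
  have h1 : (0:ℝ) ≤ c ^ 2 - 1 := by nlinarith
  have hs := Real.sq_sqrt h1
  have hs0 := Real.sqrt_nonneg (c ^ 2 - 1)
  have hy : 0 < c + Real.sqrt (c ^ 2 - 1) := by linarith
  rw [myacosh, Real.cosh_eq, Real.exp_log hy, Real.exp_neg, Real.exp_log hy]
  rw [inv_eq_one_div]
  field_simp
  nlinarith

lemma cosh_inj_nonneg {a b : ℝ} (ha : 0 ≤ a) (hb : 0 ≤ b) (h : Real.cosh a = Real.cosh b) :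
    a = b := Real.cosh_strictMonoOn.injOn ha hb h

lemma one_sub_cos_eq (t : ℝ) : 1 - Real.cos t = 2 * Real.sin (t / 2) ^ 2 := by
  have h := Real.cos_sq (t / 2)
  rw [show 2 * (t / 2) = t by ring] at h
  have h2 := Real.sin_sq (t / 2)
  linarith

lemma one_sub_cos_le (t : ℝ) : 1 - Real.cos t ≤ t ^ 2 / 2 := by
  have := Real.sin_sq_le_sq (x := t / 2)
  rw [one_sub_cos_eq]
  nlinarith

lemma one_sub_cos_nonneg (t : ℝ) : 0 ≤ 1 - Real.cos t := by
  have := Real.cos_le_one t; linarith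

lemma cosh_sub_one_eq (t : ℝ) : Real.cosh t - 1 = 2 * Real.sinh (t / 2) ^ 2 := by
  have h := Real.cosh_two_mul (t / 2)
  rw [show 2 * (t / 2) = t by ring] at h
  have h2 := Real.sinh_sq (t / 2)
  have h3 := Real.cosh_sq (t / 2)
  linarith

lemma sinh_le_mul_exp {t : ℝ} (ht : 0 ≤ t) : Real.sinh t ≤ t * Real.exp (2 * t) := by
  have h1 : (-(2 * t)) + 1 ≤ Real.exp (-(2 * t)) := Real.add_one_le_exp _
  have h2 : 0 < Real.exp (2 * t) := Real.exp_pos _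
  have h3 : Real.exp (-(2*t)) * Real.exp (2*t) = 1 := by rw [← Real.exp_add]; simp
  have h4 : Real.exp (2 * t) - 1 ≤ 2 * t * Real.exp (2 * t) := by nlinarith
  have h5 : Real.exp (-t) ≤ 1 := Real.exp_le_one_iff.mpr (by linarith)
  have h8 : Real.exp (-t) * Real.exp (2 * t) = Real.exp t := by
    rw [← Real.exp_add]; ring_nf
  have h9 : (1:ℝ) ≤ Real.exp (2 * t) := Real.one_le_exp (by linarith)
  have h10 : Real.exp (-t) * (Real.exp (2*t) - 1) ≤ 1 * (Real.exp (2*t) - 1) :=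
    mul_le_mul_of_nonneg_right h5 (by linarith)
  rw [Real.sinh_eq]
  nlinarith [Real.exp_pos (-t)]

lemma tendsto_sin_div : Tendsto (fun t : ℝ => Real.sin t / t) (𝓝[≠] (0:ℝ)) (𝓝 1) := by
  have h := Real.hasDerivAt_sin 0
  rw [hasDerivAt_iff_tendsto_slope] at h
  have hs : slope Real.sin 0 = fun t : ℝ => Real.sin t / t := by
    funext t; simp [slope_def_field]
  rw [hs, Real.cos_zero] at h
  exact h

lemma tendsto_sinh_div : Tendsto (fun t : ℝ => Real.sinh t / t) (𝓝[≠] (0:ℝ)) (𝓝 1) := by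
  have h := Real.hasDerivAt_sinh 0
  rw [hasDerivAt_iff_tendsto_slope] at h
  have hs : slope Real.sinh 0 = fun t : ℝ => Real.sinh t / t := by
    funext t; simp [slope_def_field]
  rw [hs, Real.cosh_zero] at h
  exact h

lemma tendsto_one_sub_cos_div_sq (x : ℝ) :
    Tendsto (fun u : ℝ => (1 - Real.cos (u * x)) / u ^ 2) (𝓝[≠] (0:ℝ)) (𝓝 (x ^ 2 / 2)) := by
  rcases eq_or_ne x 0 with rfl | hx
  · have : (fun u : ℝ => (1 - Real.cos (u * 0)) / u ^ 2) = fun _ => (0:ℝ) := by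
      funext u; simp
    rw [this]; simpa using tendsto_const_nhds
  · have hmap : Tendsto (fun u : ℝ => u * x / 2) (𝓝[≠] (0:ℝ)) (𝓝[≠] (0:ℝ)) := by
      rw [tendsto_nhdsWithin_iff]
      constructor
      · have : Tendsto (fun u : ℝ => u * x / 2) (𝓝 0) (𝓝 (0 * x / 2)) :=
          ((continuous_id.mul continuous_const).div_const 2).tendsto 0
        simpa using this.mono_left nhdsWithin_le_nhds
      · filter_upwards [self_mem_nhdsWithin] with u hu
        simp only [Set.mem_compl_iff, Set.mem_singleton_iff] at hu ⊢
        intro hc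
        rcases mul_eq_zero.mp (by linarith : u * x = 0) with h | h
        · exact hu h
        · exact hx h
    have hsin := tendsto_sin_div.comp hmap
    have hlim : Tendsto (fun u : ℝ => x ^ 2 / 2 * (Real.sin (u * x / 2) / (u * x / 2)) ^ 2)
        (𝓝[≠] (0:ℝ)) (𝓝 (x ^ 2 / 2 * 1 ^ 2)) :=
      tendsto_const_nhds.mul (hsin.pow 2)
    rw [show x ^ 2 / 2 * 1 ^ 2 = x ^ 2 / 2 by ring] at hlim
    refine hlim.congr' ?_
    filter_upwards [self_mem_nhdsWithin] with u hu
    simp only [Set.mem_compl_iff, Set.mem_singleton_iff] at hu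
    rw [one_sub_cos_eq (u * x)]
    field_simp

lemma tendsto_one_sub_inv_cosh_div_sq (a : ℝ) :
    Tendsto (fun u : ℝ => (1 - 1 / Real.cosh (a * u)) / u ^ 2) (𝓝[≠] (0:ℝ)) (𝓝 (a ^ 2 / 2)) := by
  rcases eq_or_ne a 0 with rfl | ha
  · have : (fun u : ℝ => (1 - 1 / Real.cosh (0 * u)) / u ^ 2) = fun _ => (0:ℝ) := by
      funext u; simp
    rw [this]; simpa using tendsto_const_nhds
  · have hmap : Tendsto (fun u : ℝ => a * u / 2) (𝓝[≠] (0:ℝ)) (𝓝[≠] (0:ℝ)) := by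
      rw [tendsto_nhdsWithin_iff]
      constructor
      · have : Tendsto (fun u : ℝ => a * u / 2) (𝓝 0) (𝓝 (a * 0 / 2)) :=
          ((continuous_const.mul continuous_id).div_const 2).tendsto 0
        simpa using this.mono_left nhdsWithin_le_nhds
      · filter_upwards [self_mem_nhdsWithin] with u hu
        simp only [Set.mem_compl_iff, Set.mem_singleton_iff] at hu ⊢
        intro hc
        rcases mul_eq_zero.mp (by linarith : a * u = 0) with h | h
        · exact ha h
        · exact hu h
    have hsinh := tendsto_sinh_div.comp hmap
    have hcosh : Tendsto (fun u : ℝ => Real.cosh (a * u)) (𝓝[≠] (0:ℝ)) (𝓝 1) := by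
      have : Tendsto (fun u : ℝ => Real.cosh (a * u)) (𝓝 0) (𝓝 (Real.cosh (a * 0))) :=
        (Real.continuous_cosh.comp (continuous_const.mul continuous_id)).tendsto 0
      simpa using this.mono_left nhdsWithin_le_nhds
    have hlim : Tendsto
        (fun u : ℝ => a ^ 2 / 2 * (Real.sinh (a * u / 2) / (a * u / 2)) ^ 2 / Real.cosh (a * u))
        (𝓝[≠] (0:ℝ)) (𝓝 (a ^ 2 / 2 * 1 ^ 2 / 1)) :=
      (tendsto_const_nhds.mul (hsinh.pow 2)).div hcosh one_ne_zero
    rw [show a ^ 2 / 2 * 1 ^ 2 / 1 = a ^ 2 / 2 by ring] at hlim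
    refine hlim.congr' ?_
    filter_upwards [self_mem_nhdsWithin] with u hu
    simp only [Set.mem_compl_iff, Set.mem_singleton_iff] at hu
    have hc := Real.cosh_pos (a * u)
    have hk := cosh_sub_one_eq (a * u)
    have h1 : 1 - 1 / Real.cosh (a * u) = 2 * Real.sinh (a * u / 2) ^ 2 / Real.cosh (a * u) := by
      field_simp
      linarith
    rw [h1]
    field_simp

/-- If a real-valued characteristic function `f` of a symmetric probability measure on `ℝ`
satisfies `f(2s) = f(s)² (f(2s)+1)/2`, then `f` is the characteristic function of a
hyperbolic secant distribution: `f(s) = 2/(e^{σs}+e^{-σs})` for some real `σ`. -/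
theorem stmt0 (f : ℝ → ℝ) (μ : Measure ℝ) [IsProbabilityMeasure μ]
    (hsymm : μ.map (fun x => -x) = μ)
    (hf : ∀ s : ℝ, f s = ∫ x, Real.cos (s * x) ∂μ)
    (heq : ∀ s : ℝ, f (2 * s) = f s ^ 2 * ((f (2 * s) + 1) / 2)) :
    ∃ σ : ℝ, ∀ s : ℝ, f s = 2 / (Real.exp (σ * s) + Real.exp (-(σ * s))) := by
  -- Integrability of cosines
  have hcont : ∀ s : ℝ, Continuous fun x : ℝ => Real.cos (s * x) := fun s =>
    Real.continuous_cos.comp (continuous_const.mul continuous_id)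
  have hcos_int : ∀ s : ℝ, Integrable (fun x => Real.cos (s * x)) μ := by
    intro s
    refine ⟨(hcont s).aestronglyMeasurable, ?_⟩
    exact HasFiniteIntegral.of_bounded (C := 1)
      (Filter.Eventually.of_forall fun x => by
        rw [Real.norm_eq_abs]; exact Real.abs_cos_le_one _)
  have hf0 : f 0 = 1 := by
    rw [hf]; simp [measure_univ]
  have hfle : ∀ s, f s ≤ 1 := by
    intro s
    rw [hf]
    calc ∫ x, Real.cos (s * x) ∂μ ≤ ∫ _, (1:ℝ) ∂μ :=
          integral_mono (hcos_int s) (integrable_const 1) fun x => Real.cos_le_one _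
      _ = 1 := by simp [measure_univ]
  have hfge : ∀ s, -1 ≤ f s := by
    intro s
    rw [hf]
    calc (-1:ℝ) = ∫ _, (-1:ℝ) ∂μ := by simp [measure_univ]
      _ ≤ ∫ x, Real.cos (s * x) ∂μ :=
          integral_mono (integrable_const (-1)) (hcos_int s) fun x => Real.neg_one_le_cos _
  have key : ∀ s, f (2 * s) * (2 - f s ^ 2) = f s ^ 2 := by
    intro s; linear_combination (2:ℝ) * heq s
  have keyhalf : ∀ s, f s * (2 - f (s / 2) ^ 2) = f (s / 2) ^ 2 := by
    intro s
    have := key (s / 2)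
    rwa [show 2 * (s / 2) = s by ring] at this
  have hposdenom : ∀ s, 0 < 2 - f s ^ 2 := by
    intro s; nlinarith [hfle s, hfge s]
  have hfnonneg : ∀ s, 0 ≤ f s := by
    intro s
    have h := keyhalf s
    have hd := hposdenom (s / 2)
    nlinarith [sq_nonneg (f (s / 2))]
  have htendhalf : ∀ s : ℝ, Tendsto (fun n : ℕ => s / 2 ^ n) atTop (𝓝 0) := by
    intro s
    have h2 : Tendsto (fun n : ℕ => ((1:ℝ) / 2) ^ n) atTop (𝓝 0) :=
      tendsto_pow_atTop_nhds_zero_of_lt_one (by norm_num) (by norm_num)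
    have h3 := h2.const_mul s
    rw [mul_zero] at h3
    refine h3.congr fun n => ?_
    rw [div_pow, one_pow, mul_one_div]
  have hfpos : ∀ s, 0 < f s := by
    intro s
    rcases (hfnonneg s).lt_or_eq with h | h
    · exact h
    · exfalso
      have hzero : ∀ n : ℕ, f (s / 2 ^ n) = 0 := by
        intro n
        induction n with
        | zero => simpa using h.symm
        | succ n ih =>
          have hk := keyhalf (s / 2 ^ n)
          rw [ih] at hk
          have h2 : f (s / 2 ^ n / 2) ^ 2 = 0 := by linarith
          have h3 : f (s / 2 ^ n / 2) = 0 := by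
            exact pow_eq_zero_iff (two_ne_zero) |>.mp h2
          rw [show s / 2 ^ (n + 1) = s / 2 ^ n / 2 by rw [pow_succ]; ring]
          exact h3
      have hlim : Tendsto (fun n : ℕ => f (s / 2 ^ n)) atTop (𝓝 1) := by
        have hdct := tendsto_integral_of_dominated_convergence (μ := μ)
          (F := fun (n : ℕ) x => Real.cos (s / 2 ^ n * x)) (f := fun _ => (1:ℝ))
          (bound := fun _ => (1:ℝ))
          (fun n => (hcos_int _).aestronglyMeasurable) (integrable_const 1)
          (fun n => Filter.Eventually.of_forall fun x => by
            rw [Real.norm_eq_abs]; exact Real.abs_cos_le_one _)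
          (Filter.Eventually.of_forall fun x => by
            have h1 : Tendsto (fun n : ℕ => s / 2 ^ n * x) atTop (𝓝 0) := by
              have := (htendhalf s).mul_const x
              rwa [zero_mul] at this
            have h2 := (Real.continuous_cos.tendsto 0).comp h1
            simpa [Function.comp_def] using h2)
        have h3 : (∫ _, (1:ℝ) ∂μ) = 1 := by simp [measure_univ]
        rw [h3] at hdct
        refine hdct.congr fun n => ?_
        exact (hf _).symm
      have hlim0 : Tendsto (fun n : ℕ => f (s / 2 ^ n)) atTop (𝓝 0) := by
        simp only [hzero]; exact tendsto_const_nhds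
      exact zero_ne_one (tendsto_nhds_unique hlim0 hlim)
  -- the auxiliary function H = arccosh (1/f)
  set H : ℝ → ℝ := fun s => myacosh (1 / f s) with hH
  have hfone : ∀ s, 1 ≤ 1 / f s := fun s => one_le_one_div (hfpos s) (hfle s)
  have Hcosh : ∀ s, Real.cosh (H s) = 1 / f s := fun s => cosh_myacosh (hfone s)
  have Hnn : ∀ s, 0 ≤ H s := fun s => myacosh_nonneg (hfone s)
  have hfH : ∀ s, f s = 1 / Real.cosh (H s) := by
    intro s; rw [Hcosh, one_div_one_div]
  have Hdouble : ∀ s, H (2 * s) = 2 * H s := by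
    intro s
    refine cosh_inj_nonneg (Hnn _) (by linarith [Hnn s]) ?_
    rw [Hcosh]
    have hc2 : Real.cosh (2 * H s) = 2 * Real.cosh (H s) ^ 2 - 1 := by
      rw [Real.cosh_two_mul, Real.sinh_sq]; ring
    rw [hc2, Hcosh]
    have hk := key s
    have h1 := (hfpos (2 * s)).ne'
    have h2 := (hfpos s).ne'
    field_simp
    nlinarith [hk, hfpos (2 * s), hfpos s]
  have Hhalf : ∀ s, H (s / 2) = H s / 2 := by
    intro s
    have := Hdouble (s / 2)
    rw [show 2 * (s / 2) = s by ring] at this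
    linarith
  have Hpow : ∀ (s : ℝ) (n : ℕ), H (s / 2 ^ n) = H s / 2 ^ n := by
    intro s n
    induction n with
    | zero => simp
    | succ n ih =>
      rw [show s / 2 ^ (n + 1) = s / 2 ^ n / 2 by rw [pow_succ]; ring, Hhalf, ih, pow_succ]
      ring
  -- basic bound : 1 - f u ≤ (H u)^2/2 * exp (2 H u)
  have hstep : ∀ u, 1 - f u ≤ H u ^ 2 / 2 * Real.exp (2 * H u) := by
    intro u
    have hcp := Real.cosh_pos (H u)
    have hc1 : 1 ≤ Real.cosh (H u) := Real.one_le_cosh _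
    have hinv : Real.cosh (H u) * (1 / Real.cosh (H u)) = 1 :=
      mul_one_div_cancel hcp.ne'
    have h1 : 1 - f u ≤ Real.cosh (H u) - 1 := by
      rw [hfH u]
      nlinarith [sq_nonneg (Real.cosh (H u) - 1)]
    have h2 : Real.cosh (H u) - 1 = 2 * Real.sinh (H u / 2) ^ 2 := cosh_sub_one_eq _
    have hnn2 : (0:ℝ) ≤ H u / 2 := by linarith [Hnn u]
    have h3 : Real.sinh (H u / 2) ≤ H u / 2 * Real.exp (2 * (H u / 2)) := sinh_le_mul_exp hnn2
    have h4 : 0 ≤ Real.sinh (H u / 2) := Real.sinh_nonneg_iff.mpr hnn2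
    have h5 : 2 * (H u / 2) = H u := by ring
    rw [h5] at h3
    have h7 : Real.sinh (H u / 2) ^ 2 ≤ (H u / 2 * Real.exp (H u)) ^ 2 :=
      pow_le_pow_left₀ h4 h3 2
    have h6 : Real.exp (H u) ^ 2 = Real.exp (2 * H u) := by
      rw [sq, ← Real.exp_add]; ring_nf
    have h8 : 2 * (H u / 2 * Real.exp (H u)) ^ 2 = H u ^ 2 / 2 * Real.exp (2 * H u) := by
      rw [mul_pow, h6]; ring
    linarith
  -- integrability of x^2
  have hseq : ∀ s : ℝ, s ≠ 0 → Tendsto (fun n : ℕ => s / 2 ^ n) atTop (𝓝[≠] (0:ℝ)) := by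
    intro s hs
    rw [tendsto_nhdsWithin_iff]
    refine ⟨htendhalf s, Filter.Eventually.of_forall fun n => ?_⟩
    simp only [Set.mem_compl_iff, Set.mem_singleton_iff]
    positivity
  set B : ℝ := H 1 ^ 2 / 2 * Real.exp (2 * H 1) with hB
  have hboundn : ∀ n : ℕ, (1 - f (1 / 2 ^ n)) * 4 ^ n ≤ B := by
    intro n
    have h1 := hstep (1 / 2 ^ n)
    have h2 : H ((1:ℝ) / 2 ^ n) = H 1 / 2 ^ n := Hpow 1 n
    rw [h2] at h1
    have hp : (1:ℝ) ≤ 2 ^ n := one_le_pow₀ (by norm_num)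
    have h3 : Real.exp (2 * (H 1 / 2 ^ n)) ≤ Real.exp (2 * H 1) := by
      apply Real.exp_le_exp.mpr
      have hds : H 1 / 2 ^ n ≤ H 1 := div_le_self (Hnn 1) hp
      linarith
    have h4 : ((2:ℝ) ^ n) ^ 2 = 4 ^ n := by
      rw [← pow_mul, mul_comm, pow_mul]; norm_num
    have h5 : (0:ℝ) < 4 ^ n := by positivity
    have h6 : (H 1 / 2 ^ n) ^ 2 * 4 ^ n = H 1 ^ 2 := by
      rw [div_pow, h4]; field_simp
    have hexp : 0 < Real.exp (2 * (H 1 / 2 ^ n)) := Real.exp_pos _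
    calc (1 - f (1 / 2 ^ n)) * 4 ^ n
        ≤ (H 1 / 2 ^ n) ^ 2 / 2 * Real.exp (2 * (H 1 / 2 ^ n)) * 4 ^ n := by nlinarith
      _ = H 1 ^ 2 / 2 * Real.exp (2 * (H 1 / 2 ^ n)) := by
          rw [show (H 1 / 2 ^ n) ^ 2 / 2 * Real.exp (2 * (H 1 / 2 ^ n)) * 4 ^ n
            = (H 1 / 2 ^ n) ^ 2 * 4 ^ n / 2 * Real.exp (2 * (H 1 / 2 ^ n)) by ring, h6]
      _ ≤ B := by
          rw [hB]
          have : (0:ℝ) ≤ H 1 ^ 2 / 2 := by positivity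
          nlinarith
  have hVfin : Integrable (fun x : ℝ => x ^ 2) μ := by
    set g : ℕ → ℝ → ℝ≥0∞ := fun n x =>
      ENNReal.ofReal ((1 - Real.cos (1 / 2 ^ n * x)) * 4 ^ n) with hg
    have hgmeas : ∀ n, Measurable (g n) := by
      intro n
      exact ENNReal.measurable_ofReal.comp
        (((continuous_const.sub (hcont (1 / 2 ^ n))).mul continuous_const).measurable)
    have hfatou := lintegral_liminf_le (μ := μ) (u := atTop) hgmeas
    have hpt : ∀ x : ℝ, Filter.liminf (fun n => g n x) atTop = ENNReal.ofReal (x ^ 2 / 2) := by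
      intro x
      have hlim := (tendsto_one_sub_cos_div_sq x).comp (hseq 1 one_ne_zero)
      have heqfun : ∀ n : ℕ, (1 - Real.cos ((1:ℝ) / 2 ^ n * x)) / ((1:ℝ) / 2 ^ n) ^ 2
          = (1 - Real.cos (1 / 2 ^ n * x)) * 4 ^ n := by
        intro n
        have h4 : ((2:ℝ) ^ n) ^ 2 = 4 ^ n := by
          rw [← pow_mul, mul_comm, pow_mul]; norm_num
        have h5 : ((4:ℝ) ^ n) ≠ 0 := by positivity
        field_simp
        rw [h4]; ring
      have hlim2 : Tendsto (fun n : ℕ => (1 - Real.cos (1 / 2 ^ n * x)) * 4 ^ n) atTop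
          (𝓝 (x ^ 2 / 2)) := by
        refine hlim.congr fun n => ?_
        simp only [Function.comp]
        exact heqfun n
      have := (ENNReal.continuous_ofReal.tendsto _).comp hlim2
      exact this.liminf_eq
    have hlintle : ∀ n : ℕ, ∫⁻ x, g n x ∂μ ≤ ENNReal.ofReal B := by
      intro n
      have hint : Integrable (fun x => (1 - Real.cos (1 / 2 ^ n * x)) * 4 ^ n) μ :=
        ((integrable_const 1).sub (hcos_int (1 / 2 ^ n))).mul_const _
      have hnn : 0 ≤ᵐ[μ] fun x => (1 - Real.cos (1 / 2 ^ n * x)) * 4 ^ n :=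
        Filter.Eventually.of_forall fun x =>
          mul_nonneg (one_sub_cos_nonneg _) (by positivity)
      rw [hg]
      rw [← ofReal_integral_eq_lintegral_ofReal hint hnn]
      apply ENNReal.ofReal_le_ofReal
      have hint2 : ∫ x, (1 - Real.cos (1 / 2 ^ n * x)) * 4 ^ n ∂μ
          = (1 - f (1 / 2 ^ n)) * 4 ^ n := by
        rw [integral_mul_const]
        congr 1
        rw [integral_sub (integrable_const 1) (hcos_int _), hf]
        simp [measure_univ]
      rw [hint2]
      exact hboundn n
    have hliminfle : Filter.liminf (fun n => ∫⁻ x, g n x ∂μ) atTop ≤ ENNReal.ofReal B := by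
      calc Filter.liminf (fun n => ∫⁻ x, g n x ∂μ) atTop
          ≤ Filter.liminf (fun _ : ℕ => ENNReal.ofReal B) atTop :=
            Filter.liminf_le_liminf (Filter.Eventually.of_forall hlintle)
        _ = ENNReal.ofReal B := Filter.liminf_const _
    have hmain : ∫⁻ x, ENNReal.ofReal (x ^ 2 / 2) ∂μ ≤ ENNReal.ofReal B := by
      calc ∫⁻ x, ENNReal.ofReal (x ^ 2 / 2) ∂μ
          = ∫⁻ x, Filter.liminf (fun n => g n x) atTop ∂μ := by
            apply lintegral_congr; intro x; rw [hpt]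
        _ ≤ Filter.liminf (fun n => ∫⁻ x, g n x ∂μ) atTop := hfatou
        _ ≤ ENNReal.ofReal B := hliminfle
    refine ⟨(continuous_pow 2).aestronglyMeasurable, ?_⟩
    rw [hasFiniteIntegral_iff_norm]
    have hrw : ∀ x : ℝ, ENNReal.ofReal ‖x ^ 2‖ = 2 * ENNReal.ofReal (x ^ 2 / 2) := by
      intro x
      rw [Real.norm_eq_abs, abs_of_nonneg (sq_nonneg x)]
      rw [← ENNReal.ofReal_ofNat, ← ENNReal.ofReal_mul (by norm_num)]
      congr 1; ring
    calc ∫⁻ x, ENNReal.ofReal ‖x ^ 2‖ ∂μ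
        = ∫⁻ x, 2 * ENNReal.ofReal (x ^ 2 / 2) ∂μ := by
          apply lintegral_congr; intro x; exact hrw x
      _ = 2 * ∫⁻ x, ENNReal.ofReal (x ^ 2 / 2) ∂μ := lintegral_const_mul 2
          (ENNReal.measurable_ofReal.comp ((continuous_pow 2).div_const 2).measurable)
      _ ≤ 2 * ENNReal.ofReal B := by
          exact mul_le_mul_right hmain 2
      _ < ⊤ := by
          refine ENNReal.mul_lt_top (by norm_num) ENNReal.ofReal_lt_top
  set V : ℝ := ∫ x, x ^ 2 ∂μ with hV
  have hVnn : 0 ≤ V := integral_nonneg fun x => sq_nonneg x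
  have hkey : ∀ s : ℝ, 0 < s → H s = Real.sqrt V * s := by
    intro s hs
    have hsne : s ≠ 0 := hs.ne'
    set a : ℝ := H s / s with ha
    have hann : 0 ≤ a := div_nonneg (Hnn s) hs.le
    have hdct : Tendsto (fun n : ℕ => ∫ x, (1 - Real.cos (s / 2 ^ n * x)) / (s / 2 ^ n) ^ 2 ∂μ)
        atTop (𝓝 (∫ x, x ^ 2 / 2 ∂μ)) := by
      refine tendsto_integral_of_dominated_convergence (bound := fun x => x ^ 2 / 2)
        (fun n => ?_) (hVfin.div_const 2) (fun n => Filter.Eventually.of_forall fun x => ?_)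
        (Filter.Eventually.of_forall fun x => ?_)
      · exact (((continuous_const.sub (hcont _)).div_const _)).aestronglyMeasurable
      · have hu2 : (0:ℝ) < (s / 2 ^ n) ^ 2 := by positivity
        have hnn := one_sub_cos_nonneg (s / 2 ^ n * x)
        have hle := one_sub_cos_le (s / 2 ^ n * x)
        rw [Real.norm_eq_abs, abs_of_nonneg (div_nonneg hnn hu2.le)]
        rw [div_le_div_iff₀ hu2 (by norm_num : (0:ℝ) < 2)]
        nlinarith
      · exact (tendsto_one_sub_cos_div_sq x).comp (hseq s hsne)
    have hint_eq : ∀ n : ℕ, ∫ x, (1 - Real.cos (s / 2 ^ n * x)) / (s / 2 ^ n) ^ 2 ∂μ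
        = (1 - f (s / 2 ^ n)) / (s / 2 ^ n) ^ 2 := by
      intro n
      rw [integral_div]
      congr 1
      rw [integral_sub (integrable_const 1) (hcos_int _), hf]
      simp [measure_univ]
    have hdct2 : Tendsto (fun n : ℕ => (1 - f (s / 2 ^ n)) / (s / 2 ^ n) ^ 2)
        atTop (𝓝 (∫ x, x ^ 2 / 2 ∂μ)) := by
      refine hdct.congr fun n => ?_
      exact hint_eq n
    have hfn : ∀ n : ℕ, (1 - f (s / 2 ^ n)) / (s / 2 ^ n) ^ 2
        = (1 - 1 / Real.cosh (a * (s / 2 ^ n))) / (s / 2 ^ n) ^ 2 := by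
      intro n
      have harg : a * (s / 2 ^ n) = H s / 2 ^ n := by
        rw [ha]; field_simp
      rw [hfH (s / 2 ^ n), Hpow s n, harg]
    have hlim2 : Tendsto (fun n : ℕ => (1 - f (s / 2 ^ n)) / (s / 2 ^ n) ^ 2)
        atTop (𝓝 (a ^ 2 / 2)) := by
      have := (tendsto_one_sub_inv_cosh_div_sq a).comp (hseq s hsne)
      refine this.congr fun n => ?_
      exact (hfn n).symm
    have huniq : a ^ 2 / 2 = ∫ x, x ^ 2 / 2 ∂μ := tendsto_nhds_unique hlim2 hdct2
    have hintdiv : (∫ x, x ^ 2 / 2 ∂μ) = V / 2 := by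
      rw [hV, integral_div]
    have haV : a ^ 2 = V := by rw [hintdiv] at huniq; linarith
    have haa : a = Real.sqrt V := by
      rw [← haV, Real.sqrt_sq hann]
    have : H s = a * s := by rw [ha]; field_simp
    rw [this, haa]
  refine ⟨Real.sqrt V, fun s => ?_⟩
  have hform : ∀ t : ℝ, 1 / Real.cosh t = 2 / (Real.exp t + Real.exp (-t)) := by
    intro t
    rw [Real.cosh_eq, one_div_div]
  rcases lt_trichotomy s 0 with hs | hs | hs
  · have heven : f s = f (-s) := by
      rw [hf, hf]
      refine integral_congr_ae (Filter.Eventually.of_forall fun x => ?_)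
      simp [neg_mul, Real.cos_neg]
    rw [heven, hfH, hkey (-s) (by linarith), hform]
    rw [show Real.sqrt V * -s = -(Real.sqrt V * s) by ring, neg_neg, add_comm]
  · subst hs
    rw [hf0]
    norm_num
  · rw [hfH, hkey s hs, hform]
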